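/- arXiv:2301.05962 — 4 statements merged into one kernel-verified Lean document; each statement's English description precedes it below -/
import Mathlib

section
/- Let 1 ≤ p < ∞, let X_N be an N-dimensional subspace of C(Ω), let ξ = (ξ¹,…,ξ^m) ∈ Ω^m and let w = (w_1,…,w_m) be positive weights. Assume (A1) there is C₁ > 0 with C₁‖u‖_{L_p(Ω,μ)} ≤ (Σ_{ν=1}^m w_ν |u(ξ^ν)|^p)^{1/p} for all u ∈ X_N, and (A2) Σ_{ν=1}^m w_ν ≤ C₂. Then for every f ∈ C(Ω) and every u* ∈ X_N minimizing (Σ_{ν=1}^m w_ν |f(ξ^ν) − u(ξ^ν)|^p)^{1/p} over u ∈ X_N, one has ‖f − u*‖_{L_p(Ω,μ)} ≤ 2^{1/p}(2C₁^{-1}C₂^{1/p} + 1) · inf_{g∈X_N} ‖f − g‖_{L_p(Ω, μ_{w,ξ})}, where μ_{w,ξ} = (1/2)μ + (1/(2‖w‖₁)) Σ_{j=1}^m w_j δ_{ξ^j} and ‖w‖₁ = Σ_{j=1}^m w_j. -/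
open MeasureTheory

noncomputable section

/-- The `L_p(Ω,μ)` norm `(∫_Ω |f|^p dμ)^{1/p}` of a complex-valued function. -/
def lpNorm {Ω : Type*} [MeasurableSpace Ω] (μ : Measure Ω) (p : ℝ) (f : Ω → ℂ) : ℝ :=
  (∫ x, ‖f x‖ ^ p ∂μ) ^ (1 / p)

section Aux
variable {d : ℕ} {Ω : Set (Fin d → ℝ)} [CompactSpace Ω]

lemma contMemℒp (τ : Measure Ω) [IsFiniteMeasure τ] (g : C(Ω, ℂ)) (P : ENNReal) :
    MemLp ⇑g P τ :=
  MemLp.of_bound g.continuous.aestronglyMeasurable ‖g‖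
    (Filter.Eventually.of_forall fun x => g.norm_coe_le_norm x)

lemma contIntegrable (τ : Measure Ω) [IsFiniteMeasure τ] (F : C(Ω, ℝ)) :
    Integrable ⇑F τ :=
  memLp_one_iff_integrable.mp <|
    MemLp.of_bound F.continuous.aestronglyMeasurable ‖F‖
      (Filter.Eventually.of_forall fun x => F.norm_coe_le_norm x)

/-- `x ↦ ‖g x‖ ^ p` as a continuous map, for `0 ≤ p`. -/
def nrp (g : C(Ω, ℂ)) (p : ℝ) (hp : 0 ≤ p) : C(Ω, ℝ) :=
  ⟨fun x => ‖g x‖ ^ p, (continuous_norm.comp g.continuous).rpow_const fun _ => Or.inr hp⟩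

@[simp] lemma nrp_apply (g : C(Ω, ℂ)) (p : ℝ) (hp : 0 ≤ p) (x : Ω) :
    nrp g p hp x = ‖g x‖ ^ p := rfl

lemma lpNorm_eq_eLpNorm (τ : Measure Ω) [IsFiniteMeasure τ] (g : C(Ω, ℂ)) {p : ℝ}
    (hp : 1 ≤ p) :
    lpNorm τ p ⇑g = (eLpNorm ⇑g (ENNReal.ofReal p) τ).toReal := by
  have hp0 : 0 < p := lt_of_lt_of_le one_pos hp
  rw [(contMemℒp τ g _).eLpNorm_eq_integral_rpow_norm (by simpa using hp0)
      ENNReal.ofReal_ne_top, ENNReal.toReal_ofReal (by positivity),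
    ENNReal.toReal_ofReal hp0.le, _root_.lpNorm, one_div]

lemma lpNorm_nonneg (τ : Measure Ω) (g : Ω → ℂ) (p : ℝ) : 0 ≤ lpNorm τ p g := by
  have : 0 ≤ ∫ x, ‖g x‖ ^ p ∂τ := integral_nonneg fun x => by positivity
  exact Real.rpow_nonneg this _

/-- Minkowski inequality for `lpNorm` in subtraction form. -/
lemma lpNorm_sub_le (τ : Measure Ω) [IsFiniteMeasure τ] (a b : C(Ω, ℂ)) {p : ℝ}
    (hp : 1 ≤ p) :
    lpNorm τ p ⇑(a - b) ≤ lpNorm τ p ⇑a + lpNorm τ p ⇑b := by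
  rw [lpNorm_eq_eLpNorm τ _ hp, lpNorm_eq_eLpNorm τ _ hp, lpNorm_eq_eLpNorm τ _ hp]
  rw [← ENNReal.toReal_add (contMemℒp τ a _).eLpNorm_ne_top (contMemℒp τ b _).eLpNorm_ne_top]
  refine ENNReal.toReal_mono (ENNReal.add_ne_top.mpr
    ⟨(contMemℒp τ a _).eLpNorm_ne_top, (contMemℒp τ b _).eLpNorm_ne_top⟩) ?_
  have h : ⇑(a - b) = ⇑a - ⇑b := by ext x; simp
  rw [h]
  exact eLpNorm_sub_le a.continuous.aestronglyMeasurable b.continuous.aestronglyMeasurable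
    (by simpa using ENNReal.ofReal_le_ofReal hp)

lemma dsum_finite {m : ℕ} (ξ : Fin m → Ω) (c : Fin m → ℝ) :
    IsFiniteMeasure (∑ j, ENNReal.ofReal (c j) • Measure.dirac (ξ j)) := by
  constructor
  rw [Measure.finset_sum_apply]
  refine ENNReal.sum_lt_top.mpr fun j _ => ?_
  simp [Measure.smul_apply]

lemma half_finite (μ : Measure Ω) [IsFiniteMeasure μ] :
    IsFiniteMeasure ((1/2 : ENNReal) • μ) := by
  constructor
  simp [Measure.smul_apply]
  exact ENNReal.mul_lt_top (by norm_num) (measure_lt_top μ _)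

lemma integral_dsum {m : ℕ} (ξ : Fin m → Ω) (c : Fin m → ℝ) (hc : ∀ j, 0 ≤ c j)
    (F : C(Ω, ℝ)) :
    ∫ x, F x ∂(∑ j, ENNReal.ofReal (c j) • Measure.dirac (ξ j)) = ∑ j, c j * F (ξ j) := by
  rw [integral_finset_sum_measure (fun j _ => by
    haveI : IsFiniteMeasure (ENNReal.ofReal (c j) • Measure.dirac (ξ j)) := by
      constructor
      simp [Measure.smul_apply]
    exact contIntegrable _ F)]
  refine Finset.sum_congr rfl fun j _ => ?_
  rw [integral_smul_measure, integral_dirac, ENNReal.toReal_ofReal (hc j), smul_eq_mul]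

lemma integral_mix (μ : Measure Ω) [IsFiniteMeasure μ] {m : ℕ} (ξ : Fin m → Ω)
    (c : Fin m → ℝ) (hc : ∀ j, 0 ≤ c j) (F : C(Ω, ℝ)) :
    ∫ x, F x ∂((1/2 : ENNReal) • μ + ∑ j, ENNReal.ofReal (c j) • Measure.dirac (ξ j)) =
      (1/2) * ∫ x, F x ∂μ + ∑ j, c j * F (ξ j) := by
  haveI := half_finite μ
  haveI := dsum_finite ξ c
  rw [integral_add_measure (contIntegrable _ F) (contIntegrable _ F),
    integral_smul_measure, integral_dsum ξ c hc F]
  norm_num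

end Aux

set_option maxHeartbeats 1000000 in
/-- error bound for the weighted least squares recovery operator
in terms of best approximation in `L_p(Ω, μ_{w,ξ})`. -/
theorem stmt0 {d : ℕ} (Ω : Set (Fin d → ℝ)) [CompactSpace Ω] (hΩ : IsCompact Ω)
    (μ : Measure Ω) [IsProbabilityMeasure μ]
    (p : ℝ) (hp : 1 ≤ p)
    (N : ℕ) (X : Submodule ℂ C(Ω, ℂ)) (hX : Module.finrank ℂ X = N)
    (m : ℕ) (ξ : Fin m → Ω) (w : Fin m → ℝ) (hw : ∀ j, 0 < w j)
    (C₁ C₂ : ℝ) (hC₁ : 0 < C₁)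
    -- Assumption A1 (discretization)
    (hA1 : ∀ u : C(Ω, ℂ), u ∈ X →
      C₁ * lpNorm μ p ⇑u ≤ (∑ j, w j * ‖u (ξ j)‖ ^ p) ^ (1 / p))
    -- Assumption A2 (weights)
    (hA2 : ∑ j, w j ≤ C₂)
    (f : C(Ω, ℂ)) (ustar : C(Ω, ℂ)) (hu : ustar ∈ X)
    -- `ustar` minimizes the weighted discrete `ℓ_p` error over `X`
    (hmin : ∀ u : C(Ω, ℂ), u ∈ X →
      (∑ j, w j * ‖f (ξ j) - ustar (ξ j)‖ ^ p) ^ (1 / p) ≤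
        (∑ j, w j * ‖f (ξ j) - u (ξ j)‖ ^ p) ^ (1 / p)) :
    lpNorm μ p ⇑(f - ustar) ≤
      (2 : ℝ) ^ (1 / p) * (2 * C₁⁻¹ * C₂ ^ (1 / p) + 1) *
        ⨅ g : X, lpNorm
          ((1 / 2 : ENNReal) • μ +
            ∑ j, ENNReal.ofReal (w j / (2 * ∑ i, w i)) • Measure.dirac (ξ j))
          p ⇑(f - (g : C(Ω, ℂ))) := by
  have hp0 : 0 < p := lt_of_lt_of_le one_pos hp
  have hq0 : 0 ≤ 1 / p := by positivity
  set W : ℝ := ∑ i, w i with hWdef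
  have hW0 : 0 ≤ W := Finset.sum_nonneg fun j _ => (hw j).le
  have hC₂0 : 0 ≤ C₂ := le_trans hW0 hA2
  have hc0 : ∀ j : Fin m, 0 ≤ w j / (2 * W) := fun j => by
    have hWpos : 0 < W := by
      rw [hWdef]; exact Finset.sum_pos (fun i _ => hw i) ⟨j, Finset.mem_univ j⟩
    have := (hw j).le
    positivity
  set ν : Measure Ω :=
    (1 / 2 : ENNReal) • μ + ∑ j, ENNReal.ofReal (w j / (2 * W)) • Measure.dirac (ξ j)
    with hνdef
  haveI hνfin : IsFiniteMeasure ν := by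
    haveI := half_finite μ; haveI := dsum_finite ξ fun j => w j / (2 * W)
    rw [hνdef]; exact inferInstance
  -- abbreviations
  have hmix : ∀ h : C(Ω, ℂ),
      ∫ x, ‖h x‖ ^ p ∂ν =
        (1/2) * (∫ x, ‖h x‖ ^ p ∂μ) + ∑ j, (w j / (2 * W)) * ‖h (ξ j)‖ ^ p := by
    intro h
    rw [hνdef]
    simpa using integral_mix μ ξ (fun j => w j / (2 * W)) hc0 (nrp h p hp0.le)
  -- discrete quantity
  set D : C(Ω, ℂ) → ℝ := fun h => ∑ j, w j * ‖h (ξ j)‖ ^ p with hDdef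
  have hD0 : ∀ h, 0 ≤ D h := fun h => Finset.sum_nonneg fun j _ => by
    have := (hw j).le; positivity
  have hIμ0 : ∀ h : C(Ω, ℂ), 0 ≤ ∫ x, ‖h x‖ ^ p ∂μ := fun h =>
    integral_nonneg fun x => by positivity
  have hIν0 : ∀ h : C(Ω, ℂ), 0 ≤ ∫ x, ‖h x‖ ^ p ∂ν := fun h =>
    integral_nonneg fun x => by positivity
  -- (i) lpNorm μ ≤ 2^{1/p} lpNorm ν
  have hμν : ∀ h : C(Ω, ℂ), lpNorm μ p ⇑h ≤ (2:ℝ) ^ (1/p) * lpNorm ν p ⇑h := by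
    intro h
    have h1 : ∫ x, ‖h x‖ ^ p ∂μ ≤ 2 * ∫ x, ‖h x‖ ^ p ∂ν := by
      rw [hmix h]
      have : 0 ≤ ∑ j, (w j / (2 * W)) * ‖h (ξ j)‖ ^ p :=
        Finset.sum_nonneg fun j _ => by have := hc0 j; positivity
      linarith
    calc lpNorm μ p ⇑h ≤ (2 * ∫ x, ‖h x‖ ^ p ∂ν) ^ (1/p) :=
          Real.rpow_le_rpow (hIμ0 h) h1 hq0
      _ = (2:ℝ) ^ (1/p) * lpNorm ν p ⇑h := by
          rw [Real.mul_rpow (by norm_num) (hIν0 h)]; rfl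
  -- (ii) D h ≤ 2W * ∫ ν
  have hDν : ∀ h : C(Ω, ℂ), D h ≤ 2 * W * ∫ x, ‖h x‖ ^ p ∂ν := by
    intro h
    rcases Nat.eq_zero_or_pos m with hm | hm
    · subst hm
      have hDz : D h = 0 := by simp [hDdef]
      have hWz : W = 0 := by simp [hWdef]
      rw [hDz, hWz, mul_zero, zero_mul]
    · have hWpos : 0 < W := by
        rw [hWdef]; exact Finset.sum_pos (fun i _ => hw i) ⟨⟨0, hm⟩, Finset.mem_univ _⟩
      rw [hmix h]
      have hsum : ∑ j, (w j / (2 * W)) * ‖h (ξ j)‖ ^ p = (2*W)⁻¹ * D h := by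
        simp only [hDdef, Finset.mul_sum]
        refine Finset.sum_congr rfl fun j _ => ?_
        field_simp
        try ring
      rw [hsum]
      have h2 : 2 * W * ((2*W)⁻¹ * D h) = D h := by
        field_simp
      nlinarith [hIμ0 h, hD0 h]
  -- (iii) D h ^{1/p} ≤ 2^{1/p} C₂^{1/p} lpNorm ν h
  have hDν' : ∀ h : C(Ω, ℂ), (D h) ^ (1/p) ≤ (2:ℝ)^(1/p) * C₂^(1/p) * lpNorm ν p ⇑h := by
    intro h
    have h1 : D h ≤ 2 * C₂ * ∫ x, ‖h x‖ ^ p ∂ν := by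
      have := hDν h
      nlinarith [hIν0 h, hA2]
    calc (D h) ^ (1/p) ≤ (2 * C₂ * ∫ x, ‖h x‖ ^ p ∂ν) ^ (1/p) :=
          Real.rpow_le_rpow (hD0 h) h1 hq0
      _ = (2:ℝ)^(1/p) * C₂^(1/p) * lpNorm ν p ⇑h := by
          rw [Real.mul_rpow (by positivity) (hIν0 h),
            Real.mul_rpow (by norm_num) hC₂0]; rfl
  -- discrete lpNorm identity: lpNorm τd = D^{1/p}
  set τd : Measure Ω := ∑ j, ENNReal.ofReal (w j) • Measure.dirac (ξ j) with hτddef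
  haveI : IsFiniteMeasure τd := dsum_finite ξ w
  have hτdD : ∀ h : C(Ω, ℂ), lpNorm τd p ⇑h = (D h) ^ (1/p) := by
    intro h
    unfold _root_.lpNorm
    congr 1
    simpa using integral_dsum ξ w (fun j => (hw j).le) (nrp h p hp0.le)
  -- fix g ∈ X and derive the bound
  have key : ∀ g : X, lpNorm μ p ⇑(f - ustar) ≤
      (2:ℝ)^(1/p) * (2 * C₁⁻¹ * C₂^(1/p) + 1) * lpNorm ν p ⇑(f - (g:C(Ω,ℂ))) := by
    intro g
    set e : ℝ := lpNorm ν p ⇑(f - (g:C(Ω,ℂ))) with hedef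
    have he0 : 0 ≤ e := lpNorm_nonneg _ _ _
    -- triangle in L_p(μ)
    have t1 : lpNorm μ p ⇑(f - ustar) ≤
        lpNorm μ p ⇑(f - (g:C(Ω,ℂ))) + lpNorm μ p ⇑(ustar - (g:C(Ω,ℂ))) := by
      have hrw : f - ustar = (f - (g:C(Ω,ℂ))) - (ustar - (g:C(Ω,ℂ))) := by abel
      rw [hrw]
      exact lpNorm_sub_le μ _ _ hp
    -- A1 bound for ustar - g
    have hmem : ustar - (g:C(Ω,ℂ)) ∈ X := sub_mem hu g.2
    have t2 : C₁ * lpNorm μ p ⇑(ustar - (g:C(Ω,ℂ))) ≤ (D (ustar - (g:C(Ω,ℂ)))) ^ (1/p) := by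
      simpa [hDdef] using hA1 _ hmem
    -- discrete triangle
    have t3 : (D (ustar - (g:C(Ω,ℂ)))) ^ (1/p) ≤
        (D (f - (g:C(Ω,ℂ)))) ^ (1/p) + (D (f - ustar)) ^ (1/p) := by
      rw [← hτdD, ← hτdD, ← hτdD]
      have hrw : ustar - (g:C(Ω,ℂ)) = (f - (g:C(Ω,ℂ))) - (f - ustar) := by abel
      rw [hrw]
      exact lpNorm_sub_le τd _ _ hp
    -- minimality
    have t4 : (D (f - ustar)) ^ (1/p) ≤ (D (f - (g:C(Ω,ℂ)))) ^ (1/p) := by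
      have := hmin (g:C(Ω,ℂ)) g.2
      simpa [hDdef, ContinuousMap.sub_apply] using this
    -- combine discrete bounds
    have t5 : (D (f - (g:C(Ω,ℂ)))) ^ (1/p) ≤ (2:ℝ)^(1/p) * C₂^(1/p) * e := hDν' _
    have t6 : lpNorm μ p ⇑(f - (g:C(Ω,ℂ))) ≤ (2:ℝ)^(1/p) * e := hμν _
    have hC₁inv : 0 < C₁⁻¹ := inv_pos.mpr hC₁
    have t7 : lpNorm μ p ⇑(ustar - (g:C(Ω,ℂ))) ≤ C₁⁻¹ * (2 * ((2:ℝ)^(1/p) * C₂^(1/p) * e)) := by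
      rw [← mul_le_mul_iff_right₀ hC₁]
      calc C₁ * lpNorm μ p ⇑(ustar - (g:C(Ω,ℂ))) ≤ (D (ustar - (g:C(Ω,ℂ)))) ^ (1/p) := t2
        _ ≤ 2 * ((2:ℝ)^(1/p) * C₂^(1/p) * e) := by nlinarith
        _ = C₁ * (C₁⁻¹ * (2 * ((2:ℝ)^(1/p) * C₂^(1/p) * e))) := by
            field_simp
    calc lpNorm μ p ⇑(f - ustar)
        ≤ lpNorm μ p ⇑(f - (g:C(Ω,ℂ))) + lpNorm μ p ⇑(ustar - (g:C(Ω,ℂ))) := t1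
      _ ≤ (2:ℝ)^(1/p) * e + C₁⁻¹ * (2 * ((2:ℝ)^(1/p) * C₂^(1/p) * e)) := by
          exact add_le_add t6 t7
      _ = (2:ℝ)^(1/p) * (2 * C₁⁻¹ * C₂^(1/p) + 1) * e := by ring
  -- pass to the infimum
  set K : ℝ := (2:ℝ)^(1/p) * (2 * C₁⁻¹ * C₂^(1/p) + 1) with hKdef
  have hKpos : 0 < K := by
    have h2 : (0:ℝ) < (2:ℝ)^(1/p) := Real.rpow_pos_of_pos (by norm_num) _
    have h3 : 0 ≤ 2 * C₁⁻¹ * C₂^(1/p) := by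
      have := Real.rpow_nonneg hC₂0 (1/p)
      have := (inv_pos.mpr hC₁).le
      positivity
    nlinarith
  have hfin : lpNorm μ p ⇑(f - ustar) / K ≤
      ⨅ g : X, lpNorm ν p ⇑(f - (g:C(Ω,ℂ))) := by
    refine le_ciInf fun g => ?_
    rw [div_le_iff₀ hKpos]
    calc lpNorm μ p ⇑(f - ustar) ≤ K * lpNorm ν p ⇑(f - (g:C(Ω,ℂ))) := key g
      _ = lpNorm ν p ⇑(f - (g:C(Ω,ℂ))) * K := by ring
  rw [div_le_iff₀ hKpos] at hfin
  calc lpNorm μ p ⇑(f - ustar)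
      ≤ (⨅ g : X, lpNorm ν p ⇑(f - (g:C(Ω,ℂ)))) * K := hfin
    _ = K * ⨅ g : X, lpNorm ν p ⇑(f - (g:C(Ω,ℂ))) := by ring
end
end

section
/- Let 1 ≤ p < ∞, let X_N be an N-dimensional subspace of C(Ω), let ξ = (ξ¹,…,ξ^m) ∈ Ω^m and let w = (w_1,…,w_m) be positive weights. Assume (A1) there is C₁ > 0 with C₁‖u‖_{L_p(Ω,μ)} ≤ (Σ_{ν=1}^m w_ν |u(ξ^ν)|^p)^{1/p} for all u ∈ X_N, and (A2) Σ_{ν=1}^m w_ν ≤ C₂. Then for every f ∈ C(Ω) and every u* ∈ X_N minimizing (Σ_{ν=1}^m w_ν |f(ξ^ν) − u(ξ^ν)|^p)^{1/p} over u ∈ X_N, one has ‖f − u*‖_{L_p(Ω,μ)} ≤ (2C₁^{-1}C₂^{1/p} + 1) · inf_{g∈X_N} ‖f − g‖_∞. -/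
open MeasureTheory

noncomputable section

theorem lpNorm_eq_toReal_eLpNorm {Ω : Type*} [MeasurableSpace Ω] (μ : Measure Ω) {p : ℝ}
    (hp : 0 < p) {f : Ω → ℂ} (hf : AEStronglyMeasurable f μ) :
    lpNorm μ p f = (eLpNorm f (ENNReal.ofReal p) μ).toReal := by
  have hp0 : ENNReal.ofReal p ≠ 0 := by simp [ENNReal.ofReal_eq_zero, not_le, hp]
  rw [eLpNorm_eq_lintegral_rpow_enorm_toReal hp0 (by simp), ENNReal.toReal_ofReal hp.le]
  rw [_root_.lpNorm, MeasureTheory.integral_eq_lintegral_of_nonneg_ae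
    (Filter.Eventually.of_forall fun x => by positivity)
    ((hf.norm.aemeasurable.pow_const p).aestronglyMeasurable)]
  rw [← ENNReal.toReal_rpow]
  congr 2
  refine lintegral_congr fun x => ?_
  rw [← ENNReal.ofReal_rpow_of_nonneg (norm_nonneg _) hp.le, ofReal_norm_eq_enorm]

theorem lpNorm_le_sup_norm {d : ℕ} (Ω : Set (Fin d → ℝ)) [CompactSpace Ω]
    (μ : Measure Ω) [IsProbabilityMeasure μ] {p : ℝ} (hp : 1 ≤ p) (h : C(Ω, ℂ)) :
    lpNorm μ p ⇑h ≤ ‖h‖ := by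
  have hp0 : (0:ℝ) < p := lt_of_lt_of_le one_pos hp
  rw [lpNorm_eq_toReal_eLpNorm μ hp0 h.continuous.aestronglyMeasurable]
  have := eLpNorm_le_of_ae_bound (μ := μ) (p := ENNReal.ofReal p) (f := ⇑h)
    (C := ‖h‖) (Filter.Eventually.of_forall fun x => h.norm_coe_le_norm x)
  simp only [measure_univ, ENNReal.one_rpow, one_mul] at this
  calc (eLpNorm (⇑h) (ENNReal.ofReal p) μ).toReal
      ≤ (ENNReal.ofReal ‖h‖).toReal := ENNReal.toReal_mono ENNReal.ofReal_ne_top this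
    _ = ‖h‖ := ENNReal.toReal_ofReal (norm_nonneg _)

theorem eLpNorm_continuousMap_ne_top {d : ℕ} (Ω : Set (Fin d → ℝ)) [CompactSpace Ω]
    (μ : Measure Ω) [IsProbabilityMeasure μ] {p : ℝ} (h : C(Ω, ℂ)) :
    eLpNorm ⇑h (ENNReal.ofReal p) μ ≠ ⊤ := by
  have := eLpNorm_le_of_ae_bound (μ := μ) (p := ENNReal.ofReal p) (f := ⇑h)
    (C := ‖h‖) (Filter.Eventually.of_forall fun x => h.norm_coe_le_norm x)
  simp only [measure_univ, ENNReal.one_rpow, one_mul] at this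
  exact (lt_of_le_of_lt this ENNReal.ofReal_lt_top).ne

theorem lpNorm_triangle {d : ℕ} (Ω : Set (Fin d → ℝ)) [CompactSpace Ω]
    (μ : Measure Ω) [IsProbabilityMeasure μ] {p : ℝ} (hp : 1 ≤ p) (u v : C(Ω, ℂ)) :
    lpNorm μ p ⇑(u + v) ≤ lpNorm μ p ⇑u + lpNorm μ p ⇑v := by
  have hp0 : (0:ℝ) < p := lt_of_lt_of_le one_pos hp
  rw [lpNorm_eq_toReal_eLpNorm μ hp0 (u+v).continuous.aestronglyMeasurable,
      lpNorm_eq_toReal_eLpNorm μ hp0 u.continuous.aestronglyMeasurable,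
      lpNorm_eq_toReal_eLpNorm μ hp0 v.continuous.aestronglyMeasurable]
  have htri : eLpNorm ⇑(u + v) (ENNReal.ofReal p) μ ≤
      eLpNorm ⇑u (ENNReal.ofReal p) μ + eLpNorm ⇑v (ENNReal.ofReal p) μ := by
    have hcoe : ⇑(u + v) = ⇑u + ⇑v := rfl
    rw [hcoe]
    exact eLpNorm_add_le u.continuous.aestronglyMeasurable v.continuous.aestronglyMeasurable
      (by simpa using ENNReal.ofReal_le_ofReal hp)
  rw [← ENNReal.toReal_add (eLpNorm_continuousMap_ne_top Ω μ u)
    (eLpNorm_continuousMap_ne_top Ω μ v)]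
  exact ENNReal.toReal_mono (by
    simp [ENNReal.add_ne_top, eLpNorm_continuousMap_ne_top Ω μ u,
      eLpNorm_continuousMap_ne_top Ω μ v]) htri

/-- error bound for the weighted least squares recovery operator
in terms of best approximation in the uniform norm. -/
theorem stmt1 {d : ℕ} (Ω : Set (Fin d → ℝ)) [CompactSpace Ω] (hΩ : IsCompact Ω)
    (μ : Measure Ω) [IsProbabilityMeasure μ]
    (p : ℝ) (hp : 1 ≤ p)
    (N : ℕ) (X : Submodule ℂ C(Ω, ℂ)) (hX : Module.finrank ℂ X = N)
    (m : ℕ) (ξ : Fin m → Ω) (w : Fin m → ℝ) (hw : ∀ j, 0 < w j)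
    (C₁ C₂ : ℝ) (hC₁ : 0 < C₁)
    -- Assumption A1 (discretization)
    (hA1 : ∀ u : C(Ω, ℂ), u ∈ X →
      C₁ * lpNorm μ p ⇑u ≤ (∑ j, w j * ‖u (ξ j)‖ ^ p) ^ (1 / p))
    -- Assumption A2 (weights)
    (hA2 : ∑ j, w j ≤ C₂)
    (f : C(Ω, ℂ)) (ustar : C(Ω, ℂ)) (hu : ustar ∈ X)
    -- `ustar` minimizes the weighted discrete `ℓ_p` error over `X`
    (hmin : ∀ u : C(Ω, ℂ), u ∈ X →
      (∑ j, w j * ‖f (ξ j) - ustar (ξ j)‖ ^ p) ^ (1 / p) ≤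
        (∑ j, w j * ‖f (ξ j) - u (ξ j)‖ ^ p) ^ (1 / p)) :
    lpNorm μ p ⇑(f - ustar) ≤
      (2 * C₁⁻¹ * C₂ ^ (1 / p) + 1) * ⨅ g : X, ‖f - (g : C(Ω, ℂ))‖ := by
  have hp0 : (0:ℝ) < p := lt_of_lt_of_le one_pos hp
  have hC₂0 : 0 ≤ C₂ := le_trans (Finset.sum_nonneg fun j _ => (hw j).le) hA2
  have hC₂p : 0 ≤ C₂ ^ (1/p) := Real.rpow_nonneg hC₂0 _
  have hKpos : 0 < 2 * C₁⁻¹ * C₂ ^ (1 / p) + 1 := by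
    have h1 : 0 ≤ 2 * C₁⁻¹ * C₂ ^ (1/p) :=
      mul_nonneg (mul_nonneg (by norm_num) (inv_nonneg.2 hC₁.le)) hC₂p
    linarith
  rw [← div_le_iff₀' hKpos]
  refine le_ciInf fun g => ?_
  rw [div_le_iff₀' hKpos]
  set g' : C(Ω, ℂ) := (g : C(Ω, ℂ)) with hg'
  set E : ℝ := ‖f - g'‖ with hE
  -- rewriting weights into p-th powers
  have hrw : ∀ (j : Fin m) (x : ℝ), 0 ≤ x → w j * x ^ p = (w j ^ (1/p) * x) ^ p := by
    intro j x hx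
    rw [Real.mul_rpow (Real.rpow_nonneg (hw j).le _) hx, ← Real.rpow_mul (hw j).le,
      one_div_mul_cancel hp0.ne', Real.rpow_one]
  set a : Fin m → ℝ := fun j => w j ^ (1/p) * ‖f (ξ j) - ustar (ξ j)‖ with haa
  set b : Fin m → ℝ := fun j => w j ^ (1/p) * ‖f (ξ j) - g' (ξ j)‖ with hbb
  have ha0 : ∀ j, 0 ≤ a j := fun j => mul_nonneg (Real.rpow_nonneg (hw j).le _) (norm_nonneg _)
  have hb0 : ∀ j, 0 ≤ b j := fun j => mul_nonneg (Real.rpow_nonneg (hw j).le _) (norm_nonneg _)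
  -- discrete Minkowski step
  have s1 : (∑ j, w j * ‖g' (ξ j) - ustar (ξ j)‖ ^ p) ^ (1/p)
      ≤ (∑ j, w j * ‖f (ξ j) - ustar (ξ j)‖ ^ p) ^ (1/p)
        + (∑ j, w j * ‖f (ξ j) - g' (ξ j)‖ ^ p) ^ (1/p) := by
    have step1 : (∑ j, w j * ‖g' (ξ j) - ustar (ξ j)‖ ^ p) ^ (1/p)
        ≤ (∑ j, (a j + b j) ^ p) ^ (1/p) := by
      apply Real.rpow_le_rpow
        (Finset.sum_nonneg fun j _ =>
          mul_nonneg (hw j).le (Real.rpow_nonneg (norm_nonneg _) _))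
        (Finset.sum_le_sum ?_) (by positivity)
      intro j _
      rw [hrw j _ (norm_nonneg _)]
      apply Real.rpow_le_rpow (mul_nonneg (Real.rpow_nonneg (hw j).le _) (norm_nonneg _))
        ?_ hp0.le
      have hdec : g' (ξ j) - ustar (ξ j) = (f (ξ j) - ustar (ξ j)) - (f (ξ j) - g' (ξ j)) := by
        ring
      rw [hdec]
      calc w j ^ (1/p) * ‖(f (ξ j) - ustar (ξ j)) - (f (ξ j) - g' (ξ j))‖
          ≤ w j ^ (1/p) * (‖f (ξ j) - ustar (ξ j)‖ + ‖f (ξ j) - g' (ξ j)‖) :=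
            mul_le_mul_of_nonneg_left (norm_sub_le _ _) (Real.rpow_nonneg (hw j).le _)
        _ = a j + b j := by rw [haa, hbb]; ring
    have step2 : (∑ j, (a j + b j) ^ p) ^ (1/p)
        ≤ (∑ j, a j ^ p) ^ (1/p) + (∑ j, b j ^ p) ^ (1/p) :=
      Real.Lp_add_le_of_nonneg (s := Finset.univ) (f := a) (g := b) hp
        (fun j _ => ha0 j) (fun j _ => hb0 j)
    have e1 : (∑ j, a j ^ p) = ∑ j, w j * ‖f (ξ j) - ustar (ξ j)‖ ^ p :=
      Finset.sum_congr rfl fun j _ => (hrw j _ (norm_nonneg _)).symm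
    have e2 : (∑ j, b j ^ p) = ∑ j, w j * ‖f (ξ j) - g' (ξ j)‖ ^ p :=
      Finset.sum_congr rfl fun j _ => (hrw j _ (norm_nonneg _)).symm
    rw [e1, e2] at step2
    exact step1.trans step2
  -- bound on discrete norm of f - g'
  have s2 : (∑ j, w j * ‖f (ξ j) - g' (ξ j)‖ ^ p) ^ (1/p) ≤ C₂ ^ (1/p) * E := by
    have hbnd : ∀ j, ‖f (ξ j) - g' (ξ j)‖ ≤ E := fun j => by
      simpa using (f - g').norm_coe_le_norm (ξ j)
    have hsum : (∑ j, w j * ‖f (ξ j) - g' (ξ j)‖ ^ p) ≤ C₂ * E ^ p := by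
      calc ∑ j, w j * ‖f (ξ j) - g' (ξ j)‖ ^ p
          ≤ ∑ j, w j * E ^ p := Finset.sum_le_sum fun j _ =>
            mul_le_mul_of_nonneg_left
              (Real.rpow_le_rpow (norm_nonneg _) (hbnd j) hp0.le) (hw j).le
        _ = (∑ j, w j) * E ^ p := by rw [← Finset.sum_mul]
        _ ≤ C₂ * E ^ p := mul_le_mul_of_nonneg_right hA2
            (Real.rpow_nonneg (norm_nonneg _) _)
    calc (∑ j, w j * ‖f (ξ j) - g' (ξ j)‖ ^ p) ^ (1/p)
        ≤ (C₂ * E ^ p) ^ (1/p) := Real.rpow_le_rpow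
          (Finset.sum_nonneg fun j _ =>
            mul_nonneg (hw j).le (Real.rpow_nonneg (norm_nonneg _) _))
          hsum (by positivity)
      _ = C₂ ^ (1/p) * E := by
          rw [Real.mul_rpow hC₂0 (Real.rpow_nonneg (norm_nonneg _) _),
            ← Real.rpow_mul (norm_nonneg _), mul_one_div_cancel hp0.ne', Real.rpow_one]
  -- minimality
  have s3 : (∑ j, w j * ‖f (ξ j) - ustar (ξ j)‖ ^ p) ^ (1/p)
      ≤ (∑ j, w j * ‖f (ξ j) - g' (ξ j)‖ ^ p) ^ (1/p) := hmin g' g.2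
  -- A1 applied to g' - ustar
  have hmem : g' - ustar ∈ X := X.sub_mem g.2 hu
  have s4 : lpNorm μ p ⇑(g' - ustar) ≤ C₁⁻¹ * ((∑ j, w j * ‖g' (ξ j) - ustar (ξ j)‖ ^ p) ^ (1/p)) := by
    rw [le_inv_mul_iff₀ hC₁]
    have := hA1 (g' - ustar) hmem
    simpa using this
  -- triangle on the measure side
  have t1 : lpNorm μ p ⇑(f - ustar) ≤ lpNorm μ p ⇑(f - g') + lpNorm μ p ⇑(g' - ustar) := by
    have hdec : f - ustar = (f - g') + (g' - ustar) := by abel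
    rw [hdec]
    exact lpNorm_triangle Ω μ hp _ _
  have t2 : lpNorm μ p ⇑(f - g') ≤ E := lpNorm_le_sup_norm Ω μ hp _
  -- combine
  have s5 : lpNorm μ p ⇑(g' - ustar) ≤ C₁⁻¹ * (2 * (C₂ ^ (1/p) * E)) := by
    refine s4.trans (mul_le_mul_of_nonneg_left ?_ (inv_nonneg.2 hC₁.le))
    calc (∑ j, w j * ‖g' (ξ j) - ustar (ξ j)‖ ^ p) ^ (1/p)
        ≤ (∑ j, w j * ‖f (ξ j) - ustar (ξ j)‖ ^ p) ^ (1/p)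
          + (∑ j, w j * ‖f (ξ j) - g' (ξ j)‖ ^ p) ^ (1/p) := s1
      _ ≤ 2 * ((∑ j, w j * ‖f (ξ j) - g' (ξ j)‖ ^ p) ^ (1/p)) := by linarith
      _ ≤ 2 * (C₂ ^ (1/p) * E) := by linarith
  have hfinal : (2 * C₁⁻¹ * C₂ ^ (1 / p) + 1) * E = E + C₁⁻¹ * (2 * (C₂ ^ (1/p) * E)) := by
    ring
  calc lpNorm μ p ⇑(f - ustar)
      ≤ lpNorm μ p ⇑(f - g') + lpNorm μ p ⇑(g' - ustar) := t1
    _ ≤ E + C₁⁻¹ * (2 * (C₂ ^ (1/p) * E)) := add_le_add t2 s5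
    _ = (2 * C₁⁻¹ * C₂ ^ (1 / p) + 1) * E := hfinal.symm
end
end

section
/- Let Φ_N = {φ_j}_{j=1}^N ⊂ C(Ω) satisfy sup_{x∈Ω}|φ_j(x)| ≤ 1 for all j, fix r ≥ 0, and let F ⊂ C(Ω). Then for every m ∈ ℕ, every ξ ∈ Ω^m, and every integer v ≥ 1, sup_{f∈F} σ_{2v}(f, Φ_N)_{L₂(Ω,μ_ξ)} ≤ v^{−r−1/2} + dist(F, A₁^r(Φ_N))_∞, where dist(F, A₁^r(Φ_N))_∞ := sup_{f∈F} inf_{g∈A₁^r(Φ_N)} ‖f − g‖_∞. -/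
open MeasureTheory

noncomputable section

/-- The `L_2(Ω,μ)` norm `(∫_Ω |f|² dμ)^{1/2}` of a complex-valued function. -/
def l2n {Ω : Type*} [MeasurableSpace Ω] (μ : Measure Ω) (f : Ω → ℂ) : ℝ :=
  (∫ x, ‖f x‖ ^ 2 ∂μ) ^ (1 / 2 : ℝ)

/-- `Σ_v(D_N)`: the set of all `v`-term approximants with respect to the
dictionary `D_N = {g 0, …, g (N-1)}`. -/
def SparseSet {Ω : Type*} [TopologicalSpace Ω] {N : ℕ} (g : Fin N → C(Ω, ℂ)) (v : ℕ) :
    Set C(Ω, ℂ) :=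
  {h | ∃ J : Finset (Fin N), J.card = v ∧ h ∈ Submodule.span ℂ (g '' ↑J)}

/-- The probability measure `μ_ξ = (1/2)μ + (1/(2m)) ∑_j δ_{ξ^j}`. -/
def discMeasure {Ω : Type*} [MeasurableSpace Ω] (μ : Measure Ω) {m : ℕ} (ξ : Fin m → Ω) :
    Measure Ω :=
  (1 / 2 : ENNReal) • μ + (2 * (m : ENNReal))⁻¹ • ∑ j, Measure.dirac (ξ j)

/-- `u` is a least squares approximant of `f` from the subspace `L` for the points `ξ`:
it minimizes `(1/m) ∑_j ‖f(ξ^j) - u(ξ^j)‖²` over `L`. -/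
def IsLSMin {Ω : Type*} [TopologicalSpace Ω] {m : ℕ} (ξ : Fin m → Ω) (f : Ω → ℂ)
    (L : Submodule ℂ C(Ω, ℂ)) (u : C(Ω, ℂ)) : Prop :=
  u ∈ L ∧ ∀ u' ∈ L,
    (1 / (m : ℝ)) * ∑ j, ‖f (ξ j) - u (ξ j)‖ ^ 2 ≤
      (1 / (m : ℝ)) * ∑ j, ‖f (ξ j) - u' (ξ j)‖ ^ 2

/-- The points `ξ` provide one-sided universal discretization with constant `C₁`
for all functions in `S`: `C₁‖f‖₂² ≤ (1/m) ∑_j |f(ξ^j)|²`. -/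
def OneSidedUD {Ω : Type*} [TopologicalSpace Ω] [MeasurableSpace Ω] (μ : Measure Ω)
    {m : ℕ} (ξ : Fin m → Ω) (C₁ : ℝ) (S : Set C(Ω, ℂ)) : Prop :=
  ∀ f ∈ S, C₁ * (l2n μ ⇑f) ^ 2 ≤ (1 / (m : ℝ)) * ∑ j, ‖f (ξ j)‖ ^ 2

/-- The class `A₁^r(Φ_N) = { ∑_j c_j φ_j : ∑_j |c_j| j^r ≤ 1 }` (indices `j = 1,…,N`). -/
def A1r {Ω : Type*} [TopologicalSpace Ω] {N : ℕ} (φ : Fin N → C(Ω, ℂ)) (r : ℝ) :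
    Set C(Ω, ℂ) :=
  {h | ∃ c : Fin N → ℂ, h = ∑ j, c j • φ j ∧ ∑ j, ‖c j‖ * ((j : ℕ) + 1 : ℝ) ^ r ≤ 1}

open Submodule
open scoped InnerProductSpace


variable {E : Type*} [NormedAddCommGroup E] [InnerProductSpace ℂ E]

lemma real_smul_c (r : ℝ) (x : E) : r • x = (r : ℂ) • x := by
  rw [← smul_one_smul ℂ r x, Complex.real_smul, mul_one]

lemma re_cmul (r : ℝ) (z : ℂ) : RCLike.re ((r : ℂ) * z) = r * RCLike.re z :=
  RCLike.re_ofReal_mul r z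

lemma exists_le_weighted_avg {ι : Type*} [Fintype ι] (p X : ι → ℝ)
    (hp0 : ∀ j, 0 ≤ p j) (hp1 : ∑ j, p j = 1) :
    ∃ j, X j ≤ ∑ i, p i * X i := by
  by_contra h
  push_neg at h
  obtain ⟨i0, hi0⟩ : ∃ i, 0 < p i := by
    by_contra h'
    push_neg at h'
    have : ∑ j, p j = 0 :=
      Finset.sum_eq_zero fun j _ => le_antisymm (h' j) (hp0 j)
    rw [this] at hp1; norm_num at hp1
  have hlt : ∑ i, p i * (∑ k, p k * X k) < ∑ i, p i * X i :=
    Finset.sum_lt_sum (fun i _ => mul_le_mul_of_nonneg_left (h i).le (hp0 i))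
      ⟨i0, Finset.mem_univ _, mul_lt_mul_of_pos_left (h i0) hi0⟩
  rw [← Finset.sum_mul, hp1, one_mul] at hlt
  exact lt_irrefl _ hlt

lemma sum_p_inner {ι : Type*} [Fintype ι] (p : ι → ℝ) (w : ι → E) (x : E) :
    ∑ j, p j * RCLike.re (⟪x, w j⟫_ℂ) = RCLike.re ⟪x, ∑ i, (p i : ℂ) • w i⟫_ℂ := by
  rw [inner_sum, map_sum]
  refine Finset.sum_congr rfl fun j _ => ?_
  rw [inner_smul_right, re_cmul]

lemma maurey_step {ι : Type*} [Fintype ι] (p : ι → ℝ) (hp0 : ∀ j, 0 ≤ p j)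
    (hp1 : ∑ j, p j = 1) (w : ι → E) (A : ℝ) (hw : ∀ j, ‖w j‖ ≤ A)
    (u : E) (t : ℝ) :
    ∃ j, ‖u + t • ((∑ i, (p i : ℂ) • w i) - w j)‖ ^ 2 ≤ ‖u‖ ^ 2 + t ^ 2 * A ^ 2 := by
  haveI : Nonempty ι := by
    by_contra hne
    rw [not_nonempty_iff] at hne
    rw [Finset.univ_eq_empty, Finset.sum_empty] at hp1
    norm_num at hp1
  have hA0 : 0 ≤ A := le_trans (norm_nonneg _) (hw (Classical.arbitrary ι))
  set g : E := ∑ i, (p i : ℂ) • w i with hg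
  set a : E := u + t • g with ha
  -- expansion of each term
  have hexp : ∀ j, ‖u + t • (g - w j)‖ ^ 2
      = ‖a‖ ^ 2 - 2 * (t * RCLike.re ⟪a, w j⟫_ℂ) + t ^ 2 * ‖w j‖ ^ 2 := by
    intro j
    have : u + t • (g - w j) = a - t • w j := by
      rw [ha, smul_sub]; abel
    rw [this, real_smul_c t (w j), @norm_sub_sq ℂ, inner_smul_right, re_cmul,
      norm_smul]
    have : ‖(t : ℂ)‖ = |t| := by rw [Complex.norm_real, Real.norm_eq_abs]
    rw [this, mul_pow, sq_abs]
  -- the average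
  have havg : ∑ j, p j * ‖u + t • (g - w j)‖ ^ 2
      = ‖a‖ ^ 2 - 2 * (t * RCLike.re ⟪a, g⟫_ℂ) + t ^ 2 * ∑ j, p j * ‖w j‖ ^ 2 := by
    calc ∑ j, p j * ‖u + t • (g - w j)‖ ^ 2
        = ∑ j, (p j * ‖a‖ ^ 2 - 2 * t * (p j * RCLike.re ⟪a, w j⟫_ℂ)
            + t ^ 2 * (p j * ‖w j‖ ^ 2)) := by
          refine Finset.sum_congr rfl fun j _ => ?_
          rw [hexp j]; ring
      _ = ‖a‖ ^ 2 - 2 * (t * RCLike.re ⟪a, g⟫_ℂ) + t ^ 2 * ∑ j, p j * ‖w j‖ ^ 2 := by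
          rw [Finset.sum_add_distrib, Finset.sum_sub_distrib, ← Finset.sum_mul, hp1,
            ← Finset.mul_sum, ← Finset.mul_sum, sum_p_inner p w a, ← hg]
          ring
  -- identity ‖a‖² - 2 t re⟪a,g⟫ = ‖u‖² - t²‖g‖²  since u = a - t•g
  have hid : ‖a‖ ^ 2 - 2 * (t * RCLike.re ⟪a, g⟫_ℂ) = ‖u‖ ^ 2 - t ^ 2 * ‖g‖ ^ 2 := by
    have hu : u = a - t • g := by rw [ha]; abel
    rw [hu, real_smul_c t g, @norm_sub_sq ℂ, inner_smul_right, re_cmul,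
      norm_smul]
    have : ‖(t : ℂ)‖ = |t| := by rw [Complex.norm_real, Real.norm_eq_abs]
    rw [this, mul_pow, sq_abs]
    ring
  have hbound : ∑ j, p j * ‖u + t • (g - w j)‖ ^ 2 ≤ ‖u‖ ^ 2 + t ^ 2 * A ^ 2 := by
    rw [havg, hid]
    have h1 : ∑ j, p j * ‖w j‖ ^ 2 ≤ A ^ 2 := by
      calc ∑ j, p j * ‖w j‖ ^ 2 ≤ ∑ j, p j * A ^ 2 :=
            Finset.sum_le_sum fun j _ => mul_le_mul_of_nonneg_left
              (pow_le_pow_left₀ (norm_nonneg _) (hw j) 2) (hp0 j)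
        _ = A ^ 2 := by rw [← Finset.sum_mul, hp1, one_mul]
    nlinarith [sq_nonneg ‖g‖, sq_nonneg t, mul_le_mul_of_nonneg_left h1 (sq_nonneg t)]
  obtain ⟨j, hj⟩ := exists_le_weighted_avg p (fun j => ‖u + t • (g - w j)‖ ^ 2) hp0 hp1
  exact ⟨j, hj.trans hbound⟩

lemma maurey {ι : Type*} [Fintype ι] (p : ι → ℝ) (hp0 : ∀ j, 0 ≤ p j)
    (hp1 : ∑ j, p j = 1) (w : ι → E) (A : ℝ) (hw : ∀ j, ‖w j‖ ≤ A) :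
    ∀ n : ℕ, 1 ≤ n → ∃ (J : Finset ι) (h : E), J.card ≤ n ∧
      h ∈ Submodule.span ℂ (w '' ↑J) ∧
      ‖(∑ i, (p i : ℂ) • w i) - h‖ ^ 2 ≤ A ^ 2 / n := by
  classical
  intro n hn
  induction n, hn using Nat.le_induction with
  | base =>
    obtain ⟨j, hj⟩ := maurey_step p hp0 hp1 w A hw 0 1
    refine ⟨{j}, w j, by simp, subset_span ⟨j, by simp, rfl⟩, ?_⟩
    simp only [Nat.cast_one, div_one]
    simpa using hj
  | succ n hn ih =>
    obtain ⟨J, h, hcard, hmem, hbound⟩ := ih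
    set g : E := ∑ i, (p i : ℂ) • w i with hg
    set a : ℝ := (n : ℝ) / ((n : ℝ) + 1) with ha
    set b : ℝ := 1 / ((n : ℝ) + 1) with hb
    have hn1 : ((n : ℝ) + 1) ≠ 0 := by positivity
    have hab : a + b = 1 := by rw [ha, hb]; field_simp
    obtain ⟨j, hj⟩ := maurey_step p hp0 hp1 w A hw (a • (g - h)) b
    refine ⟨insert j J, a • h + b • w j, ?_, ?_, ?_⟩
    · calc (insert j J).card ≤ J.card + 1 := Finset.card_insert_le _ _
        _ ≤ n + 1 := by omega
    · refine Submodule.add_mem _ ?_ ?_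
      · rw [real_smul_c]
        exact Submodule.smul_mem _ _ (span_mono (Set.image_mono (by
          intro x hx; simp only [Finset.coe_insert, Set.mem_insert_iff]; exact Or.inr hx)) hmem)
      · rw [real_smul_c]
        exact Submodule.smul_mem _ _ (subset_span ⟨j, by simp, rfl⟩)
    · have hvec : a • (g - h) + b • (g - w j) = g - (a • h + b • w j) := by
        rw [smul_sub, smul_sub]
        have : a • g + b • g = g := by rw [← add_smul, hab, one_smul]
        calc a • g - a • h + (b • g - b • w j)
            = (a • g + b • g) - (a • h + b • w j) := by abel
          _ = g - (a • h + b • w j) := by rw [this]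
      rw [hvec] at hj
      have hna : ‖a • (g - h)‖ ^ 2 = a ^ 2 * ‖g - h‖ ^ 2 := by
        rw [norm_smul, Real.norm_eq_abs, mul_pow, sq_abs]
      have ha0 : (0:ℝ) ≤ a ^ 2 := sq_nonneg a
      have hstep : ‖g - (a • h + b • w j)‖ ^ 2 ≤ a ^ 2 * (A ^ 2 / n) + b ^ 2 * A ^ 2 := by
        calc ‖g - (a • h + b • w j)‖ ^ 2 ≤ ‖a • (g - h)‖ ^ 2 + b ^ 2 * A ^ 2 := hj
          _ = a ^ 2 * ‖g - h‖ ^ 2 + b ^ 2 * A ^ 2 := by rw [hna]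
          _ ≤ a ^ 2 * (A ^ 2 / n) + b ^ 2 * A ^ 2 := by
              gcongr
      refine hstep.trans (le_of_eq ?_)
      rw [ha, hb]
      have hnn : (n : ℝ) ≠ 0 := by
        have : (1:ℕ) ≤ n := hn
        positivity
      field_simp
      push_cast
      ring

-- basic facts about discMeasure
lemma discMeasure_univ_le {Ω : Type*} [MeasurableSpace Ω] (μ : Measure Ω)
    [IsProbabilityMeasure μ] {m : ℕ} (ξ : Fin m → Ω) :
    discMeasure μ ξ Set.univ ≤ 1 := by
  rw [discMeasure]
  rw [Measure.add_apply, Measure.smul_apply, Measure.smul_apply, measure_univ]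
  have hsum : (∑ j, Measure.dirac (ξ j)) Set.univ = (m : ENNReal) := by
    rw [Measure.coe_finset_sum, Finset.sum_apply]
    simp [measure_univ]
  rw [hsum]
  rcases Nat.eq_zero_or_pos m with hm | hm
  · subst hm; simp
  · have hmne : (m : ENNReal) ≠ 0 := by
      exact Nat.cast_ne_zero.mpr hm.ne'
    have : (2 * (m : ENNReal))⁻¹ • (m : ENNReal) = 2⁻¹ := by
      rw [smul_eq_mul, ENNReal.mul_inv (by norm_num) (by simp), mul_assoc,
        ENNReal.inv_mul_cancel hmne (by simp)]
      simp
    rw [this, one_div, smul_eq_mul, mul_one, ENNReal.inv_two_add_inv_two]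

lemma l2n_nonneg {Ω : Type*} [MeasurableSpace Ω] (μ : Measure Ω) (f : Ω → ℂ) :
    0 ≤ l2n μ f := by
  apply Real.rpow_nonneg
  apply integral_nonneg
  intro x
  positivity

section ToLp

variable {X : Type*} [TopologicalSpace X] [CompactSpace X] [MeasurableSpace X]
  [BorelSpace X] (ν : Measure X) [IsFiniteMeasure ν]

lemma norm_toLp_eq_l2n (u : C(X, ℂ)) :
    ‖ContinuousMap.toLp (E := ℂ) 2 ν ℂ u‖ = l2n ν ⇑u := by
  have hae : (ContinuousMap.toLp (E := ℂ) 2 ν ℂ u : Lp ℂ 2 ν) =ᵐ[ν] ⇑u :=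
    ContinuousMap.coeFn_toLp (E := ℂ) (𝕜 := ℂ) ν u
  have hmem : MemLp (⇑u) 2 ν := (memLp_congr_ae hae).mp (Lp.memLp _)
  rw [Lp.norm_def, eLpNorm_congr_ae hae,
    hmem.eLpNorm_eq_integral_rpow_norm (by norm_num) (by norm_num),
    ENNReal.toReal_ofReal]
  · have h2 : ((2 : ENNReal)).toReal = (2 : ℝ) := by norm_num
    rw [l2n, h2]
    have hx : ∀ x : X, ‖u x‖ ^ (2 : ℝ) = ‖u x‖ ^ (2 : ℕ) := fun x => by
      rw [← Real.rpow_natCast ‖u x‖ 2]; norm_num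
    simp_rw [hx]
    norm_num
  · apply Real.rpow_nonneg
    apply integral_nonneg
    intro x
    positivity

lemma norm_toLp_le_sup (hν : ν Set.univ ≤ 1) (u : C(X, ℂ)) :
    ‖ContinuousMap.toLp (E := ℂ) 2 ν ℂ u‖ ≤ ‖u‖ := by
  calc ‖ContinuousMap.toLp (E := ℂ) 2 ν ℂ u‖
      ≤ ‖(ContinuousMap.toLp (E := ℂ) 2 ν ℂ : C(X, ℂ) →L[ℂ] Lp ℂ 2 ν)‖ * ‖u‖ :=
        ContinuousLinearMap.le_opNorm _ _
    _ ≤ 1 * ‖u‖ := by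
        apply mul_le_mul_of_nonneg_right _ (norm_nonneg _)
        refine le_trans (ContinuousMap.toLp_norm_le ν) ?_
        have hm1 : measureUnivNNReal ν ≤ 1 := by
          rw [← ENNReal.coe_le_coe, coe_measureUnivNNReal]
          simpa using hν
        have : (measureUnivNNReal ν : ℝ) ^ ((2 : ENNReal).toReal)⁻¹ ≤ 1 := by
          apply Real.rpow_le_one (by positivity) _ (by norm_num)
          exact_mod_cast hm1
        exact_mod_cast this
    _ = ‖u‖ := one_mul _

end ToLp

set_option maxHeartbeats 1000000 in
/-- for any points `ξ ∈ Ω^m`, any `f` in the class `F` satisfies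
`σ_{2v}(f,Φ_N)_{L₂(Ω,μ_ξ)} ≤ v^{-r-1/2} + dist(f, A₁^r(Φ_N))_∞`, which gives
`sup_{f∈F} σ_{2v}(f,Φ_N)_{L₂(Ω,μ_ξ)} ≤ v^{-r-1/2} + dist(F, A₁^r(Φ_N))_∞`. -/
theorem stmt6 {d : ℕ} (Ω : Set (Fin d → ℝ)) [CompactSpace Ω] (hΩ : IsCompact Ω)
    (μ : Measure Ω) [IsProbabilityMeasure μ]
    (N : ℕ) (φ : Fin N → C(Ω, ℂ))
    (hφ : ∀ (j : Fin N) (x : Ω), ‖φ j x‖ ≤ 1)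
    (r : ℝ) (hr : 0 ≤ r) (F : Set C(Ω, ℂ))
    (m : ℕ) (ξ : Fin m → Ω) (v : ℕ) (hv : 1 ≤ v) :
    ∀ f ∈ F,
      (⨅ h : SparseSet φ (2 * v), l2n (discMeasure μ ξ) ⇑(f - (h : C(Ω, ℂ)))) ≤
        (v : ℝ) ^ (-r - 1 / 2 : ℝ) +
          ⨅ gA : A1r φ r, ‖f - (gA : C(Ω, ℂ))‖ := by
  classical
  intro f hf
  set ν := discMeasure μ ξ with hνdef
  have hνuniv : ν Set.univ ≤ 1 := discMeasure_univ_le μ ξ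
  haveI : IsFiniteMeasure ν := ⟨lt_of_le_of_lt hνuniv (by norm_num)⟩
  set T : C(Ω, ℂ) →L[ℂ] Lp ℂ 2 ν := ContinuousMap.toLp (E := ℂ) 2 ν ℂ with hT
  have hTnorm : ∀ u : C(Ω, ℂ), ‖T u‖ = l2n ν ⇑u := fun u => norm_toLp_eq_l2n ν u
  have hTle : ∀ u : C(Ω, ℂ), ‖T u‖ ≤ ‖u‖ := fun u => norm_toLp_le_sup ν hνuniv u
  have hv0 : (0 : ℝ) < v := by exact_mod_cast hv
  have hrpow_nonneg : (0 : ℝ) ≤ (v : ℝ) ^ (-r - 1 / 2 : ℝ) := Real.rpow_nonneg hv0.le _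
  have hbdd : BddBelow (Set.range fun h : SparseSet φ (2 * v) =>
      l2n ν ⇑(f - (h : C(Ω, ℂ)))) := by
    refine ⟨0, ?_⟩
    rintro x ⟨h, rfl⟩
    exact l2n_nonneg ν _
  have key : ∀ g ∈ A1r φ r,
      (⨅ h : SparseSet φ (2 * v), l2n ν ⇑(f - (h : C(Ω, ℂ)))) ≤
        (v : ℝ) ^ (-r - 1 / 2 : ℝ) + ‖f - g‖ := by
    rintro g ⟨c, hgc, hc1⟩
    by_cases hN : N < 2 * v
    · haveI : IsEmpty ↥(SparseSet φ (2 * v)) := by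
        constructor
        rintro ⟨h, J, hJ, -⟩
        have h1 : J.card ≤ Fintype.card (Fin N) := J.card_le_univ
        rw [Fintype.card_fin] at h1
        omega
      rw [iInf_of_isEmpty, Real.sInf_empty]
      exact add_nonneg hrpow_nonneg (norm_nonneg _)
    · push_neg at hN
      set S₁ : Finset (Fin N) := Finset.univ.filter (fun j => (j : ℕ) < v) with hS₁
      set S₂ : Finset (Fin N) := S₁ᶜ with hS₂
      have hS₂mem : ∀ j ∈ S₂, v ≤ (j : ℕ) := by
        intro j hj
        rw [hS₂, Finset.mem_compl, hS₁, Finset.mem_filter] at hj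
        push_neg at hj
        exact hj (Finset.mem_univ j)
      set A : ℝ := ∑ j ∈ S₂, ‖c j‖ with hA
      have hA0 : 0 ≤ A := Finset.sum_nonneg fun j _ => norm_nonneg _
      have hvr_pos : (0 : ℝ) < (v : ℝ) ^ r := Real.rpow_pos_of_pos hv0 r
      have hAle : A ≤ (v : ℝ) ^ (-r : ℝ) := by
        have h1 : A * (v : ℝ) ^ r ≤ 1 := by
          calc A * (v : ℝ) ^ r = ∑ j ∈ S₂, ‖c j‖ * (v : ℝ) ^ r := by
                rw [hA, Finset.sum_mul]
            _ ≤ ∑ j ∈ S₂, ‖c j‖ * ((j : ℕ) + 1 : ℝ) ^ r := by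
                refine Finset.sum_le_sum fun j hj => ?_
                refine mul_le_mul_of_nonneg_left ?_ (norm_nonneg _)
                apply Real.rpow_le_rpow hv0.le _ hr
                have h2 : (v : ℝ) ≤ ((j : ℕ) : ℝ) := by
                  exact_mod_cast hS₂mem j hj
                linarith
            _ ≤ ∑ j, ‖c j‖ * ((j : ℕ) + 1 : ℝ) ^ r := by
                refine Finset.sum_le_sum_of_subset_of_nonneg (Finset.subset_univ _) ?_
                intro j _ _
                positivity
            _ ≤ 1 := hc1
        rw [Real.rpow_neg hv0.le, ← one_div]
        exact (le_div_iff₀ hvr_pos).mpr h1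
      set tail : C(Ω, ℂ) := ∑ j ∈ S₂, c j • φ j with htail
      have hsparse : ∃ (J' : Finset (Fin N)) (h₀ : C(Ω, ℂ)), J'.card ≤ v ∧
          h₀ ∈ Submodule.span ℂ (φ '' ↑J') ∧
          ‖T tail - T h₀‖ ≤ (v : ℝ) ^ (-r - 1 / 2 : ℝ) := by
        by_cases hAz : A = 0
        · refine ⟨∅, 0, by simp, Submodule.zero_mem _, ?_⟩
          have htail0 : tail = 0 := by
            rw [htail]
            apply Finset.sum_eq_zero
            intro j hj
            have hcj : ‖c j‖ = 0 := by
              have h0 : ∀ i ∈ S₂, (0 : ℝ) ≤ ‖c i‖ := fun i _ => norm_nonneg _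
              have := (Finset.sum_eq_zero_iff_of_nonneg h0).mp (hA ▸ hAz)
              exact this j hj
            rw [norm_eq_zero.mp hcj, zero_smul]
          rw [htail0]
          simpa using hrpow_nonneg
        · have hApos : 0 < A := lt_of_le_of_ne hA0 (Ne.symm hAz)
          set p : Fin N → ℝ := fun j => if j ∈ S₂ then ‖c j‖ / A else 0 with hp
          set w : Fin N → Lp ℂ 2 ν := fun j =>
            if j ∈ S₂ then (((A : ℝ) : ℂ) * (c j / ((‖c j‖ : ℝ) : ℂ))) • T (φ j) else 0
            with hw
          have hp0 : ∀ j, 0 ≤ p j := by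
            intro j
            rw [hp]
            dsimp only
            split
            · positivity
            · exact le_rfl
          have hp1 : ∑ j, p j = 1 := by
            rw [hp]
            dsimp only
            rw [Finset.sum_ite_mem, Finset.univ_inter, ← Finset.sum_div, ← hA,
              div_self hAz]
          have hwle : ∀ j, ‖w j‖ ≤ A := by
            intro j
            rw [hw]
            dsimp only
            split
            · rw [norm_smul]
              have h1 : ‖(((A : ℝ) : ℂ) * (c j / ((‖c j‖ : ℝ) : ℂ)))‖ ≤ A := by
                rw [norm_mul, Complex.norm_real, Real.norm_eq_abs, abs_of_nonneg hA0,
                  norm_div, Complex.norm_real, Real.norm_eq_abs,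
                  abs_of_nonneg (norm_nonneg _)]
                calc A * (‖c j‖ / ‖c j‖) ≤ A * 1 :=
                      mul_le_mul_of_nonneg_left (div_self_le_one _) hA0
                  _ = A := mul_one A
              have h2 : ‖T (φ j)‖ ≤ 1 :=
                le_trans (hTle _) ((ContinuousMap.norm_le _ zero_le_one).mpr (hφ j))
              calc ‖(((A : ℝ) : ℂ) * (c j / ((‖c j‖ : ℝ) : ℂ)))‖ * ‖T (φ j)‖
                  ≤ A * 1 := mul_le_mul h1 h2 (norm_nonneg _) hA0
                _ = A := mul_one A
            · rw [norm_zero]; exact hA0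
          have hrepr : (∑ i, ((p i : ℝ) : ℂ) • w i) = T tail := by
            have hterm : ∀ j : Fin N,
                ((p j : ℝ) : ℂ) • w j = if j ∈ S₂ then c j • T (φ j) else 0 := by
              intro j
              rw [hp, hw]
              dsimp only
              by_cases hj : j ∈ S₂
              · rw [if_pos hj, if_pos hj, if_pos hj, smul_smul]
                congr 1
                by_cases hc : c j = 0
                · simp [hc]
                · have hnc : ((‖c j‖ : ℝ) : ℂ) ≠ 0 := by
                    exact_mod_cast norm_ne_zero_iff.mpr hc
                  have hAc : ((A : ℝ) : ℂ) ≠ 0 := by exact_mod_cast hAz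
                  rw [Complex.ofReal_div]
                  calc (((‖c j‖ : ℝ) : ℂ) / ((A : ℝ) : ℂ)) *
                        (((A : ℝ) : ℂ) * (c j / ((‖c j‖ : ℝ) : ℂ)))
                      = ((((‖c j‖ : ℝ) : ℂ)) / (((‖c j‖ : ℝ) : ℂ))) *
                          ((((A : ℝ) : ℂ)) / (((A : ℝ) : ℂ))) * c j := by ring
                    _ = c j := by rw [div_self hnc, div_self hAc, one_mul, one_mul]
              · rw [if_neg hj, if_neg hj, if_neg hj, smul_zero]
            simp_rw [hterm]
            rw [Finset.sum_ite_mem, Finset.univ_inter, htail, map_sum]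
            exact Finset.sum_congr rfl fun j _ => (_root_.map_smul T (c j) (φ j)).symm
          obtain ⟨J', hLp, hJcard, hmemLp, hbnd⟩ := maurey p hp0 hp1 w A hwle v hv
          rw [hrepr] at hbnd
          have hsub : Submodule.span ℂ (w '' ↑J') ≤
              Submodule.map (T : C(Ω, ℂ) →ₗ[ℂ] Lp ℂ 2 ν) (Submodule.span ℂ (φ '' ↑J')) := by
            rw [span_le]
            rintro x ⟨j, hj, rfl⟩
            rw [hw]
            dsimp only
            split
            · refine ⟨(((A : ℝ) : ℂ) * (c j / ((‖c j‖ : ℝ) : ℂ))) • φ j,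
                Submodule.smul_mem _ _ (subset_span ⟨j, hj, rfl⟩), ?_⟩
              exact _root_.map_smul T _ _
            · exact ⟨0, Submodule.zero_mem _, map_zero T⟩
          obtain ⟨h₀, hh₀mem, rfl⟩ := hsub hmemLp
          refine ⟨J', h₀, hJcard, hh₀mem, ?_⟩
          have hsq : ‖T tail - T h₀‖ ^ 2 ≤ ((v : ℝ) ^ (-r - 1 / 2 : ℝ)) ^ 2 := by
            refine hbnd.trans ?_
            have e1 : ((v : ℝ) ^ (-r - 1 / 2 : ℝ)) ^ 2
                = (v : ℝ) ^ ((-r - 1 / 2) * 2 : ℝ) := by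
              rw [← Real.rpow_natCast ((v : ℝ) ^ (-r - 1 / 2 : ℝ)) 2,
                ← Real.rpow_mul hv0.le]
              norm_num
            have e2 : ((v : ℝ) ^ (-r : ℝ)) ^ 2 = (v : ℝ) ^ ((-r) * 2 : ℝ) := by
              rw [← Real.rpow_natCast ((v : ℝ) ^ (-r : ℝ)) 2, ← Real.rpow_mul hv0.le]
              norm_num
            calc A ^ 2 / (v : ℝ) ≤ ((v : ℝ) ^ (-r : ℝ)) ^ 2 / (v : ℝ) := by
                  gcongr
              _ = (v : ℝ) ^ ((-r - 1 / 2) * 2 : ℝ) := by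
                  rw [e2, div_eq_mul_inv, ← Real.rpow_neg_one (v : ℝ),
                    ← Real.rpow_add hv0]
                  congr 1
                  ring
              _ = ((v : ℝ) ^ (-r - 1 / 2 : ℝ)) ^ 2 := e1.symm
          have hs := Real.sqrt_le_sqrt hsq
          rwa [Real.sqrt_sq (norm_nonneg _), Real.sqrt_sq hrpow_nonneg] at hs
      obtain ⟨J', h₀, hJ'card, hh₀mem, hh₀⟩ := hsparse
      have hS₁card : S₁.card ≤ v := by
        calc S₁.card ≤ (Finset.range v).card := by
              refine Finset.card_le_card_of_injOn (fun j => (j : ℕ)) ?_ ?_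
              · intro j hj
                rw [hS₁, Finset.mem_coe, Finset.mem_filter] at hj
                exact Finset.mem_coe.mpr (Finset.mem_range.mpr hj.2)
              · intro a _ b _ hab
                exact Fin.val_injective hab
          _ = v := Finset.card_range v
      obtain ⟨Jfull, hsubJ, -, hcardJ⟩ := Finset.exists_subsuperset_card_eq (n := 2 * v)
        (Finset.subset_univ (S₁ ∪ J'))
        (le_trans (Finset.card_union_le _ _) (by omega))
        (by rw [Finset.card_univ, Fintype.card_fin]; omega)
      set q : C(Ω, ℂ) := (∑ j ∈ S₁, c j • φ j) + h₀ with hq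
      have hqmem : q ∈ SparseSet φ (2 * v) := by
        refine ⟨Jfull, hcardJ, ?_⟩
        apply Submodule.add_mem
        · apply Submodule.sum_mem
          intro j hj
          apply Submodule.smul_mem
          apply subset_span
          exact ⟨j, hsubJ (Finset.mem_union_left _ hj), rfl⟩
        · refine span_mono (Set.image_mono ?_) hh₀mem
          intro x hx
          exact hsubJ (Finset.mem_union_right _ hx)
      refine le_trans (ciInf_le hbdd ⟨q, hqmem⟩) ?_
      have hfq : l2n ν ⇑(f - q) = ‖T (f - q)‖ := (hTnorm _).symm
      rw [hfq]
      have hgsplit : g = (∑ j ∈ S₁, c j • φ j) + tail := by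
        rw [hgc, htail, hS₂, ← Finset.sum_add_sum_compl S₁ fun j => c j • φ j]
      have hdecomp : f - q = (f - g) + (tail - h₀) := by
        rw [hq, hgsplit]
        abel
      calc ‖T (f - q)‖ = ‖T (f - g) + (T tail - T h₀)‖ := by
            rw [hdecomp]
            simp only [_root_.map_add, _root_.map_sub]
        _ ≤ ‖T (f - g)‖ + ‖T tail - T h₀‖ := norm_add_le _ _
        _ ≤ ‖f - g‖ + (v : ℝ) ^ (-r - 1 / 2 : ℝ) := add_le_add (hTle _) hh₀
        _ = (v : ℝ) ^ (-r - 1 / 2 : ℝ) + ‖f - g‖ := add_comm _ _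
  have hA1ne : Nonempty ↥(A1r φ r) := by
    refine ⟨⟨0, 0, ?_, ?_⟩⟩
    · simp
    · simp
  have h2 : (⨅ h : SparseSet φ (2 * v), l2n ν ⇑(f - (h : C(Ω, ℂ))))
      - (v : ℝ) ^ (-r - 1 / 2 : ℝ) ≤ ⨅ gA : A1r φ r, ‖f - (gA : C(Ω, ℂ))‖ := by
    refine le_ciInf fun gA => ?_
    have := key gA gA.2
    linarith
  linarith
end
end

section
/- Let V be a Banach space continuously embedded in C(Ω) and let W := {f ∈ V : ‖f‖_V ≤ 1} be its unit ball. Then for every integer m ≥ 1, inf_{ξ∈Ω^m} sup { |∫_Ω f dμ| : f ∈ W, f(ξ^ν) = 0 for ν = 1,…,m } = κ_m(W). -/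
open MeasureTheory

noncomputable section

/-- Duality step: if `‖L g‖ ≤ S` on the unit ball of the common kernel of the `e ν`,
then there are coefficients `c` with `‖L - ∑ c ν • e ν‖ ≤ S`. -/
lemma key_lemma {V : Type} [NormedAddCommGroup V] [NormedSpace ℂ V]
    (L : V →L[ℂ] ℂ) {m : ℕ} (e : Fin m → (V →L[ℂ] ℂ)) (S : ℝ) (hS : 0 ≤ S)
    (h : ∀ g : V, ‖g‖ ≤ 1 → (∀ ν, e ν g = 0) → ‖L g‖ ≤ S) :
    ∃ c : Fin m → ℂ, ‖L - ∑ ν, c ν • e ν‖ ≤ S := by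
  set N : Submodule ℂ V := ⨅ ν, LinearMap.ker (e ν : V →ₗ[ℂ] ℂ) with hN
  have hmemN : ∀ x : V, x ∈ N ↔ ∀ ν, e ν x = 0 := by
    intro x
    simp [hN, Submodule.mem_iInf, LinearMap.mem_ker]
  -- bound L on N
  have hbound : ∀ x : V, x ∈ N → ‖L x‖ ≤ S * ‖x‖ := by
    intro x hx
    rcases eq_or_ne x 0 with rfl | hx0
    · simp
    · have hx' : ‖x‖ ≠ 0 := norm_ne_zero_iff.2 hx0
      set y : V := (‖x‖⁻¹ : ℂ) • x with hy
      have hyn : ‖y‖ = 1 := by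
        simp [hy, norm_smul, inv_mul_cancel₀ hx']
      have hyv : ∀ ν, e ν y = 0 := by
        intro ν
        simp [hy, _root_.map_smul, (hmemN x).1 hx ν]
      have := h y hyn.le hyv
      have hLy : ‖L y‖ = ‖x‖⁻¹ * ‖L x‖ := by
        simp [hy, _root_.map_smul, norm_smul]
      rw [hLy] at this
      have := mul_le_mul_of_nonneg_left this (norm_nonneg x)
      calc ‖L x‖ = ‖x‖ * (‖x‖⁻¹ * ‖L x‖) := by
            field_simp
        _ ≤ ‖x‖ * S := this
        _ = S * ‖x‖ := mul_comm _ _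
  let LN : N →L[ℂ] ℂ := L.comp (Submodule.subtypeL N)
  have hLN : ‖LN‖ ≤ S := by
    refine ContinuousLinearMap.opNorm_le_bound _ hS fun x => ?_
    simpa [LN] using hbound x x.2
  obtain ⟨L', hext, hnorm⟩ := exists_extension_norm_eq N LN
  set D : V →L[ℂ] ℂ := L - L' with hD
  have hker : (⨅ ν, LinearMap.ker ((e ν : V →ₗ[ℂ] ℂ))) ≤ LinearMap.ker (D : V →ₗ[ℂ] ℂ) := by
    intro x hx
    have hxN : x ∈ N := by
      rw [hmemN]
      intro ν
      simpa using (Submodule.mem_iInf _).1 hx ν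
    have : L' x = L x := hext ⟨x, hxN⟩
    simp [hD, LinearMap.mem_ker, this]
  have hspan := mem_span_of_iInf_ker_le_ker (L := fun ν => ((e ν : V →ₗ[ℂ] ℂ)))
    (K := (D : V →ₗ[ℂ] ℂ)) hker
  obtain ⟨c, hc⟩ := (Submodule.mem_span_range_iff_exists_fun ℂ).1 hspan
  refine ⟨c, ?_⟩
  have heq : L - ∑ ν, c ν • e ν = L' := by
    ext x
    have := LinearMap.congr_fun hc x
    simp only [LinearMap.coe_sum, Finset.sum_apply, LinearMap.smul_apply,
      ContinuousLinearMap.coe_coe, smul_eq_mul, hD, ContinuousLinearMap.coe_sub',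
      Pi.sub_apply] at this
    simp only [ContinuousLinearMap.sub_apply, ContinuousLinearMap.sum_apply,
      ContinuousLinearMap.smul_apply, smul_eq_mul]
    linear_combination -this
  rw [heq, hnorm]
  exact hLN

/-- for the unit ball `W` of a Banach space `V` continuously embedded
in `C(Ω)`, the optimal error of numerical integration with `m` knots `κ_m(W)` equals
`inf_{ξ∈Ω^m} sup { |∫_Ω f dμ| : f ∈ W, f(ξ^ν) = 0 for all ν }`. -/
theorem stmt12 {d : ℕ} (Ω : Set (Fin d → ℝ)) [CompactSpace Ω] (hΩ : IsCompact Ω)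
    (μ : Measure Ω) [IsProbabilityMeasure μ]
    (V : Type) [NormedAddCommGroup V] [NormedSpace ℂ V] [CompleteSpace V]
    (ι : V →L[ℂ] C(Ω, ℂ)) (hι : Function.Injective ι)
    (m : ℕ) (hm : 1 ≤ m) :
    (⨅ ξ : Fin m → Ω,
        ⨆ f : {g : V // ‖g‖ ≤ 1 ∧ ∀ ν, (ι g) (ξ ν) = 0},
          ‖∫ x, (ι (f : V)) x ∂μ‖) =
      ⨅ q : (Fin m → Ω) × (Fin m → ℂ),
        ⨆ f : {g : V // ‖g‖ ≤ 1},
          ‖(∫ x, (ι (f : V)) x ∂μ) - ∑ ν, q.2 ν * (ι (f : V)) (q.1 ν)‖ := by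
  have hne : Nonempty Ω := by
    by_contra h
    rw [not_nonempty_iff] at h
    have h1 := measure_univ (μ := μ)
    rw [μ.eq_zero_of_isEmpty] at h1
    simp at h1
  haveI h1V : Nonempty {g : V // ‖g‖ ≤ 1} := ⟨⟨0, by simp⟩⟩
  haveI h2V : ∀ ξ : Fin m → Ω, Nonempty {g : V // ‖g‖ ≤ 1 ∧ ∀ ν, (ι g) (ξ ν) = 0} :=
    fun ξ => ⟨⟨0, by simp, fun ν => by simp⟩⟩
  -- integrability of continuous functions
  have int_g : ∀ g : V, Integrable (fun x => (ι g) x) μ :=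
    fun g => (ι g).continuous.integrable_of_hasCompactSupport
      (HasCompactSupport.of_compactSpace _)
  -- the integration functional
  let L : V →L[ℂ] ℂ := LinearMap.mkContinuous
    { toFun := fun g => ∫ x, (ι g) x ∂μ
      map_add' := fun g h => by
        simp only [map_add, ContinuousMap.add_apply]
        exact integral_add (int_g g) (int_g h)
      map_smul' := fun c g => by
        simp only [_root_.map_smul, ContinuousMap.smul_apply, smul_eq_mul, RingHom.id_apply]
        exact integral_const_mul c _ }
    ‖ι‖ (fun g => by
      have h1 : ‖∫ x, (ι g) x ∂μ‖ ≤ ‖ι g‖ * (μ Set.univ).toReal :=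
        norm_integral_le_of_norm_le_const
          (Filter.Eventually.of_forall fun x => (ι g).norm_coe_le_norm x)
      simp only [measure_univ, ENNReal.toReal_one, mul_one] at h1
      exact h1.trans (ι.le_opNorm g))
  have hL : ∀ g : V, L g = ∫ x, (ι g) x ∂μ := fun g => rfl
  -- evaluation functionals
  let e : Ω → (V →L[ℂ] ℂ) := fun x => (ContinuousMap.evalCLM ℂ x).comp ι
  have he : ∀ (x : Ω) (g : V), e x g = (ι g) x := fun x g => rfl
  -- the combined functional for a quadrature rule
  let T : (Fin m → Ω) × (Fin m → ℂ) → (V →L[ℂ] ℂ) :=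
    fun q => L - ∑ ν, q.2 ν • e (q.1 ν)
  have hT : ∀ (q : (Fin m → Ω) × (Fin m → ℂ)) (g : V),
      T q g = (∫ x, (ι g) x ∂μ) - ∑ ν, q.2 ν * (ι g) (q.1 ν) := by
    intro q g
    simp [T, hL, he]
  -- the suprema, rewritten
  have hB : ∀ q : (Fin m → Ω) × (Fin m → ℂ),
      (⨆ f : {g : V // ‖g‖ ≤ 1},
        ‖(∫ x, (ι (f : V)) x ∂μ) - ∑ ν, q.2 ν * (ι (f : V)) (q.1 ν)‖)
      = ⨆ f : {g : V // ‖g‖ ≤ 1}, ‖T q (f : V)‖ := by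
    intro q
    congr 1
    funext f
    rw [hT]
  have hBddB : ∀ q : (Fin m → Ω) × (Fin m → ℂ),
      BddAbove (Set.range fun f : {g : V // ‖g‖ ≤ 1} => ‖T q (f : V)‖) := by
    intro q
    refine ⟨‖T q‖, ?_⟩
    rintro x ⟨f, rfl⟩
    calc ‖T q (f : V)‖ ≤ ‖T q‖ * ‖(f : V)‖ := (T q).le_opNorm _
      _ ≤ ‖T q‖ * 1 := mul_le_mul_of_nonneg_left f.2 (norm_nonneg _)
      _ = ‖T q‖ := mul_one _
  -- the A ξ suprema
  have hBddA : ∀ ξ : Fin m → Ω,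
      BddAbove (Set.range fun f : {g : V // ‖g‖ ≤ 1 ∧ ∀ ν, (ι g) (ξ ν) = 0} =>
        ‖∫ x, (ι (f : V)) x ∂μ‖) := by
    intro ξ
    refine ⟨‖L‖, ?_⟩
    rintro x ⟨f, rfl⟩
    calc ‖∫ x, (ι (f : V)) x ∂μ‖ = ‖L (f : V)‖ := by rw [hL]
      _ ≤ ‖L‖ * ‖(f : V)‖ := L.le_opNorm _
      _ ≤ ‖L‖ * 1 := mul_le_mul_of_nonneg_left f.2.1 (norm_nonneg _)
      _ = ‖L‖ := mul_one _
  have hAnonneg : ∀ ξ : Fin m → Ω,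
      0 ≤ ⨆ f : {g : V // ‖g‖ ≤ 1 ∧ ∀ ν, (ι g) (ξ ν) = 0}, ‖∫ x, (ι (f : V)) x ∂μ‖ :=
    fun ξ => Real.iSup_nonneg fun f => norm_nonneg _
  have hBnonneg : ∀ q : (Fin m → Ω) × (Fin m → ℂ),
      0 ≤ ⨆ f : {g : V // ‖g‖ ≤ 1},
        ‖(∫ x, (ι (f : V)) x ∂μ) - ∑ ν, q.2 ν * (ι (f : V)) (q.1 ν)‖ :=
    fun q => Real.iSup_nonneg fun f => norm_nonneg _
  -- A ξ ≤ B (ξ, c) for any c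
  have hAB : ∀ (ξ : Fin m → Ω) (c : Fin m → ℂ),
      (⨆ f : {g : V // ‖g‖ ≤ 1 ∧ ∀ ν, (ι g) (ξ ν) = 0}, ‖∫ x, (ι (f : V)) x ∂μ‖)
      ≤ ⨆ f : {g : V // ‖g‖ ≤ 1},
          ‖(∫ x, (ι (f : V)) x ∂μ) - ∑ ν, c ν * (ι (f : V)) (ξ ν)‖ := by
    intro ξ c
    haveI := h2V ξ
    refine ciSup_le fun f => ?_
    have hf : ∀ ν, (ι (f : V)) (ξ ν) = 0 := f.2.2
    have : ‖∫ x, (ι (f : V)) x ∂μ‖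
        = ‖(∫ x, (ι (f : V)) x ∂μ) - ∑ ν, c ν * (ι (f : V)) ((ξ, c).1 ν)‖ := by
      simp [hf]
    rw [this]
    have hb : BddAbove (Set.range (fun f : {g : V // ‖g‖ ≤ 1} =>
        ‖(∫ x, (ι (f : V)) x ∂μ) - ∑ ν, c ν * (ι (f : V)) (ξ ν)‖)) := by
      refine ⟨‖T (ξ, c)‖, ?_⟩
      rintro x ⟨g, rfl⟩
      have h2 : (∫ x, (ι (g : V)) x ∂μ) - ∑ ν, c ν * (ι (g : V)) (ξ ν)
          = T (ξ, c) (g : V) := by simp [hT]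
      dsimp only
      rw [h2]
      calc ‖T (ξ, c) (g : V)‖ ≤ ‖T (ξ, c)‖ * ‖(g : V)‖ := (T (ξ, c)).le_opNorm _
        _ ≤ ‖T (ξ, c)‖ * 1 := mul_le_mul_of_nonneg_left g.2 (norm_nonneg _)
        _ = ‖T (ξ, c)‖ := mul_one _
    exact le_ciSup hb ⟨(f : V), f.2.1⟩
  refine le_antisymm ?_ ?_
  · -- LHS ≤ RHS
    refine le_ciInf fun q => ?_
    refine le_trans (ciInf_le ⟨0, ?_⟩ q.1) (hAB q.1 q.2)
    rintro x ⟨ξ, rfl⟩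
    exact hAnonneg ξ
  · -- RHS ≤ LHS
    refine le_ciInf fun ξ => ?_
    set S : ℝ := ⨆ f : {g : V // ‖g‖ ≤ 1 ∧ ∀ ν, (ι g) (ξ ν) = 0},
      ‖∫ x, (ι (f : V)) x ∂μ‖ with hS
    obtain ⟨c, hc⟩ := key_lemma L (fun ν => e (ξ ν)) S (hAnonneg ξ)
      (fun g hg hgv => by
        have := le_ciSup (hBddA ξ) (⟨g, hg, fun ν => hgv ν⟩ :
          {g : V // ‖g‖ ≤ 1 ∧ ∀ ν, (ι g) (ξ ν) = 0})
        rw [hL]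
        exact this)
    refine le_trans (ciInf_le ⟨0, ?_⟩ (ξ, c)) ?_
    · rintro x ⟨q, rfl⟩
      exact hBnonneg q
    · rw [hB (ξ, c)]
      refine ciSup_le fun f => ?_
      calc ‖T (ξ, c) (f : V)‖ ≤ ‖T (ξ, c)‖ * ‖(f : V)‖ := (T (ξ, c)).le_opNorm _
        _ ≤ ‖T (ξ, c)‖ * 1 := mul_le_mul_of_nonneg_left f.2 (norm_nonneg _)
        _ = ‖T (ξ, c)‖ := mul_one _
        _ ≤ S := hc
end
end
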